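/- arXiv:2301.10701 — 2 statements merged into one kernel-verified Lean document; each statement's English description precedes it below -/
import Mathlib

section
/- For any γ ∈ [0,1], q(γ) ≥ q(1/2) = p² > 0, where the lower bound q(γ) ≥ p² follows from the Gaussian correlation inequality applied to the two symmetric slabs. -/
open MeasureTheory ProbabilityTheory
open scoped ENNReal

open Real

noncomputable def stdGauss : Measure ℝ := gaussianReal 0 1

/-- The pair probability function `q(γ)` for two independent standard Gaussians. -/
noncomputable def pairProb (κ γ : ℝ) : ℝ≥0∞ :=
  (stdGauss.prod stdGauss) {z : ℝ × ℝ |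
    |Real.sqrt γ * z.1 + Real.sqrt (1 - γ) * z.2| ≤ κ ∧
    |Real.sqrt γ * z.1 - Real.sqrt (1 - γ) * z.2| ≤ κ}

noncomputable def rotL (a b : ℝ) : (ℝ × ℝ) →ₗ[ℝ] ℝ × ℝ :=
  LinearMap.prod (a • LinearMap.fst ℝ ℝ ℝ + b • LinearMap.snd ℝ ℝ ℝ)
    (b • LinearMap.fst ℝ ℝ ℝ - a • LinearMap.snd ℝ ℝ ℝ)

lemma rotL_apply (a b : ℝ) (p : ℝ × ℝ) :
    rotL a b p = (a * p.1 + b * p.2, b * p.1 - a * p.2) := by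
  simp [rotL, smul_eq_mul]

lemma rotL_invol {a b : ℝ} (hab : a ^ 2 + b ^ 2 = 1) :
    (rotL a b).comp (rotL a b) = LinearMap.id := by
  apply LinearMap.ext
  intro p
  simp only [LinearMap.comp_apply, rotL_apply, LinearMap.id_apply]
  obtain ⟨x, y⟩ := p
  simp only
  rw [Prod.mk.injEq]
  constructor
  · linear_combination x * hab
  · linear_combination y * hab

lemma rotL_det_ne_zero {a b : ℝ} (hab : a ^ 2 + b ^ 2 = 1) :
    LinearMap.det (rotL a b) ≠ 0 ∧ |(LinearMap.det (rotL a b))⁻¹| = 1 := by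
  have h : LinearMap.det (rotL a b) * LinearMap.det (rotL a b) = 1 := by
    rw [← LinearMap.det_comp, rotL_invol hab, LinearMap.det_id]
  rcases mul_self_eq_one_iff.1 h with h1 | h1 <;> rw [h1] <;> norm_num

noncomputable def rot (a b : ℝ) : ℝ × ℝ → ℝ × ℝ :=
  fun p => (a * p.1 + b * p.2, b * p.1 - a * p.2)

lemma rot_measurable (a b : ℝ) : Measurable (rot a b) := by
  unfold rot; fun_prop

lemma rot_vol_preserving {a b : ℝ} (hab : a ^ 2 + b ^ 2 = 1) :
    MeasurePreserving (rot a b) (volume : Measure (ℝ × ℝ)) volume := by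
  refine ⟨rot_measurable a b, ?_⟩
  have hHaar : ((volume : Measure (ℝ × ℝ))).IsAddHaarMeasure := by
    rw [Measure.volume_eq_prod]; infer_instance
  obtain ⟨hdet, habs⟩ := rotL_det_ne_zero hab
  ext s hs
  rw [Measure.map_apply (rot_measurable a b) hs]
  have : rot a b ⁻¹' s = (rotL a b) ⁻¹' s := by
    ext p; simp [rot, rotL_apply]
  rw [this, Measure.addHaar_preimage_linearMap volume hdet, habs]
  simp

instance : IsProbabilityMeasure stdGauss := by
  unfold stdGauss; infer_instance

lemma stdGauss_eq : stdGauss = volume.withDensity (gaussianPDF 0 1) :=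
  gaussianReal_of_var_ne_zero 0 one_ne_zero

lemma pdf_mul_pdf (u v : ℝ) :
    gaussianPDFReal 0 1 u * gaussianPDFReal 0 1 v
      = ((Real.sqrt (2 * π))⁻¹) ^ 2 * rexp (-(u ^ 2 + v ^ 2) / 2) := by
  simp only [gaussianPDFReal, NNReal.coe_one, mul_one, sub_zero]
  rw [show (√(2 * π))⁻¹ * rexp (-u ^ 2 / 2) * ((√(2 * π))⁻¹ * rexp (-v ^ 2 / 2))
      = (√(2 * π))⁻¹ ^ 2 * (rexp (-u ^ 2 / 2) * rexp (-v ^ 2 / 2)) by ring,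
    ← Real.exp_add]
  ring_nf

lemma pdf_mul_pdf_rot {a b : ℝ} (hab : a ^ 2 + b ^ 2 = 1) (p : ℝ × ℝ) :
    gaussianPDF 0 1 (a * p.1 + b * p.2) * gaussianPDF 0 1 (b * p.1 - a * p.2)
      = gaussianPDF 0 1 p.1 * gaussianPDF 0 1 p.2 := by
  simp only [gaussianPDF]
  rw [← ENNReal.ofReal_mul (gaussianPDFReal_nonneg _ _ _),
    ← ENNReal.ofReal_mul (gaussianPDFReal_nonneg _ _ _), pdf_mul_pdf, pdf_mul_pdf]
  congr 2
  have : (a * p.1 + b * p.2) ^ 2 + (b * p.1 - a * p.2) ^ 2 = p.1 ^ 2 + p.2 ^ 2 := by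
    have h1 : (a * p.1 + b * p.2) ^ 2 + (b * p.1 - a * p.2) ^ 2
        = (a ^ 2 + b ^ 2) * (p.1 ^ 2 + p.2 ^ 2) := by ring
    rw [h1, hab, one_mul]
  rw [this]

lemma prodDensity : stdGauss.prod stdGauss
    = (volume.prod volume).withDensity (fun p : ℝ × ℝ => gaussianPDF 0 1 p.1 * gaussianPDF 0 1 p.2) := by
  refine Measure.prod_eq (μ := stdGauss) (ν := stdGauss) ?_
  intro s t hs ht
  rw [withDensity_apply _ (hs.prod ht), ← Measure.prod_restrict,
    lintegral_prod_mul (measurable_gaussianPDF 0 1).aemeasurable (measurable_gaussianPDF 0 1).aemeasurable,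
    stdGauss_eq, withDensity_apply _ hs, withDensity_apply _ ht]

lemma rot_gauss_preserving {a b : ℝ} (hab : a ^ 2 + b ^ 2 = 1) {s : Set (ℝ × ℝ)}
    (hs : MeasurableSet s) :
    (stdGauss.prod stdGauss) (rot a b ⁻¹' s) = (stdGauss.prod stdGauss) s := by
  set D : ℝ × ℝ → ℝ≥0∞ := fun p => gaussianPDF 0 1 p.1 * gaussianPDF 0 1 p.2 with hD
  have hDm : Measurable D := by
    exact ((measurable_gaussianPDF 0 1).comp measurable_fst).mul
      ((measurable_gaussianPDF 0 1).comp measurable_snd)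
  have hpre : MeasurableSet (rot a b ⁻¹' s) := (rot_measurable a b) hs
  rw [prodDensity, withDensity_apply _ hpre, withDensity_apply _ hs,
    ← lintegral_indicator hpre D, ← lintegral_indicator hs D]
  have hkey : ∀ p : ℝ × ℝ, (rot a b ⁻¹' s).indicator D p = s.indicator D (rot a b p) := by
    intro p
    by_cases hp : rot a b p ∈ s
    · rw [Set.indicator_of_mem hp, Set.indicator_of_mem (by exact hp)]
      exact (pdf_mul_pdf_rot hab p).symm
    · rw [Set.indicator_of_notMem hp, Set.indicator_of_notMem (by exact hp)]
  calc ∫⁻ p, (rot a b ⁻¹' s).indicator D p ∂(volume.prod volume)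
      = ∫⁻ p, s.indicator D (rot a b p) ∂(volume.prod volume) := by
        exact lintegral_congr hkey
    _ = ∫⁻ p, s.indicator D p ∂(volume.prod volume) := by
        rw [← Measure.volume_eq_prod]
        exact (rot_vol_preserving hab).lintegral_comp (hDm.indicator hs)

lemma marginal {a b : ℝ} (hab : a ^ 2 + b ^ 2 = 1) (κ : ℝ) :
    (stdGauss.prod stdGauss) {p : ℝ × ℝ | |a * p.1 + b * p.2| ≤ κ}
      = stdGauss {z : ℝ | |z| ≤ κ} := by
  have hset : {p : ℝ × ℝ | |a * p.1 + b * p.2| ≤ κ}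
      = rot a b ⁻¹' ({z : ℝ | |z| ≤ κ} ×ˢ (Set.univ : Set ℝ)) := by
    ext p; simp [rot]
  have hm : MeasurableSet ({z : ℝ | |z| ≤ κ} ×ˢ (Set.univ : Set ℝ)) := by
    apply MeasurableSet.prod _ MeasurableSet.univ
    exact measurableSet_le (by fun_prop) measurable_const
  rw [hset, rot_gauss_preserving hab hm, Measure.prod_prod, measure_univ, mul_one]

lemma measurableSet_absle (κ : ℝ) : MeasurableSet {z : ℝ | |z| ≤ κ} :=
  measurableSet_le (by fun_prop) measurable_const

lemma part1 (κ : ℝ) :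
    pairProb κ (1/2) = (stdGauss {z : ℝ | |z| ≤ κ}) ^ 2 := by
  set a : ℝ := Real.sqrt (1/2) with ha
  have hab : a ^ 2 + a ^ 2 = 1 := by
    rw [ha, Real.sq_sqrt (by norm_num : (0:ℝ) ≤ 1/2)]; norm_num
  have hset : {z : ℝ × ℝ | |Real.sqrt (1/2) * z.1 + Real.sqrt (1 - 1/2) * z.2| ≤ κ ∧
      |Real.sqrt (1/2) * z.1 - Real.sqrt (1 - 1/2) * z.2| ≤ κ}
      = rot a a ⁻¹' ({z : ℝ | |z| ≤ κ} ×ˢ {z : ℝ | |z| ≤ κ}) := by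
    ext p
    simp only [Set.mem_setOf_eq, Set.mem_preimage, rot, Set.mem_prod]
    have : a = (√2)⁻¹ := by
      rw [ha, show (1:ℝ)/2 = 2⁻¹ by norm_num, Real.sqrt_inv]
    rw [this]
    norm_num
  rw [pairProb, hset, rot_gauss_preserving hab ((measurableSet_absle κ).prod (measurableSet_absle κ)),
    Measure.prod_prod, sq]

lemma part2 (κ : ℝ) (hκ : 0 < κ) : (0:ℝ≥0∞) < stdGauss {z : ℝ | |z| ≤ κ} := by
  have hsub : Set.Icc (0:ℝ) κ ⊆ {z : ℝ | |z| ≤ κ} := by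
    intro z hz
    simp only [Set.mem_Icc] at hz
    simp only [Set.mem_setOf_eq, abs_le]
    constructor <;> linarith
  refine lt_of_lt_of_le ?_ (measure_mono hsub)
  rw [stdGauss, gaussianReal_apply 0 one_ne_zero]
  by_contra h
  push_neg at h
  have h0 : ∫⁻ x in Set.Icc (0:ℝ) κ, gaussianPDF 0 1 x = 0 := le_antisymm h zero_le
  rw [lintegral_eq_zero_iff (measurable_gaussianPDF 0 1)] at h0
  have : (volume.restrict (Set.Icc (0:ℝ) κ)) {x | ¬ gaussianPDF 0 1 x = 0} = 0 := h0
  have hall : {x : ℝ | ¬ gaussianPDF 0 1 x = 0} = Set.univ := by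
    ext x; simp only [Set.mem_setOf_eq, Set.mem_univ, iff_true]
    exact (gaussianPDF_pos 0 one_ne_zero x).ne'
  rw [hall, Measure.restrict_apply_univ, Real.volume_Icc] at this
  simp only [sub_zero] at this
  exact (ENNReal.ofReal_pos.2 hκ).ne' this

lemma pdf_anti {x y : ℝ} (h : x ^ 2 ≤ y ^ 2) :
    gaussianPDFReal 0 1 y ≤ gaussianPDFReal 0 1 x := by
  simp only [gaussianPDFReal, NNReal.coe_one, mul_one, sub_zero]
  apply mul_le_mul_of_nonneg_left _ (inv_nonneg.2 (Real.sqrt_nonneg _))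
  apply Real.exp_le_exp.2
  linarith

lemma stdGauss_Icc (u v : ℝ) (huv : u ≤ v) :
    stdGauss (Set.Icc u v) = ENNReal.ofReal (∫ x in u..v, gaussianPDFReal 0 1 x) := by
  rw [stdGauss, gaussianReal_apply_eq_integral 0 one_ne_zero,
    intervalIntegral.integral_of_le huv, integral_Icc_eq_integral_Ioc]

lemma icc_center_anti_core {L : ℝ} (hL : 0 ≤ L) {c c' : ℝ} (hc : 0 ≤ c) (hcc : c ≤ c') :
    stdGauss (Set.Icc (c' - L) (c' + L)) ≤ stdGauss (Set.Icc (c - L) (c + L)) := by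
  have hint : ∀ u v : ℝ, IntervalIntegrable (gaussianPDFReal 0 1) volume u v :=
    fun u v => (integrable_gaussianPDFReal 0 1).intervalIntegrable
  rw [stdGauss_Icc _ _ (by linarith), stdGauss_Icc _ _ (by linarith)]
  apply ENNReal.ofReal_le_ofReal
  have split1 : (∫ x in (c-L)..(c+L), gaussianPDFReal 0 1 x)
      + (∫ x in (c+L)..(c'+L), gaussianPDFReal 0 1 x)
      = ∫ x in (c-L)..(c'+L), gaussianPDFReal 0 1 x :=
    intervalIntegral.integral_add_adjacent_intervals (hint _ _) (hint _ _)
  have split2 : (∫ x in (c-L)..(c'-L), gaussianPDFReal 0 1 x)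
      + (∫ x in (c'-L)..(c'+L), gaussianPDFReal 0 1 x)
      = ∫ x in (c-L)..(c'+L), gaussianPDFReal 0 1 x :=
    intervalIntegral.integral_add_adjacent_intervals (hint _ _) (hint _ _)
  have hshift : (∫ x in (c+L)..(c'+L), gaussianPDFReal 0 1 x)
      = ∫ x in (c-L)..(c'-L), gaussianPDFReal 0 1 (x + 2*L) := by
    rw [intervalIntegral.integral_comp_add_right]
    congr 1 <;> ring
  have hmono : (∫ x in (c-L)..(c'-L), gaussianPDFReal 0 1 (x + 2*L))
      ≤ ∫ x in (c-L)..(c'-L), gaussianPDFReal 0 1 x := by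
    apply intervalIntegral.integral_mono_on (by linarith)
    · exact ((integrable_gaussianPDFReal 0 1).comp_add_right (2*L)).intervalIntegrable
    · exact hint _ _
    · intro x hx
      apply pdf_anti
      have hx1 : c - L ≤ x := hx.1
      nlinarith
  linarith

lemma pdf_neg (x : ℝ) : gaussianPDFReal 0 1 (-x) = gaussianPDFReal 0 1 x := by
  simp only [gaussianPDFReal, NNReal.coe_one, mul_one, sub_zero, neg_sq]

lemma stdGauss_reflect (u v : ℝ) :
    stdGauss (Set.Icc u v) = stdGauss (Set.Icc (-v) (-u)) := by
  rcases le_or_gt u v with huv | huv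
  · rw [stdGauss_Icc u v huv, stdGauss_Icc (-v) (-u) (by linarith)]
    congr 1
    rw [← intervalIntegral.integral_comp_neg (fun x => gaussianPDFReal 0 1 x)]
    simp only [pdf_neg]
  · rw [Set.Icc_eq_empty (not_le.2 huv), Set.Icc_eq_empty (by intro h; exact absurd (by linarith : u ≤ v) (not_le.2 huv))]

lemma icc_center_anti {L : ℝ} (hL : 0 ≤ L) {c c' : ℝ} (h : |c| ≤ |c'|) :
    stdGauss (Set.Icc (c' - L) (c' + L)) ≤ stdGauss (Set.Icc (c - L) (c + L)) := by
  have habs : ∀ m : ℝ, stdGauss (Set.Icc (m - L) (m + L)) = stdGauss (Set.Icc (|m| - L) (|m| + L)) := by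
    intro m
    rcases abs_choice m with hm | hm
    · rw [hm]
    · rw [stdGauss_reflect (m - L) (m + L)]
      congr 2 <;> rw [hm] <;> ring
  rw [habs c, habs c']
  exact icc_center_anti_core hL (abs_nonneg c) h

lemma rearrange {a b c d : ℝ≥0∞} (hba : b ≤ a) (hdc : d ≤ c) :
    a * d + b * c ≤ a * c + b * d := by
  have hc : d + (c - d) = c := add_tsub_cancel_of_le hdc
  calc a * d + b * c = a * d + (b * d + b * (c - d)) := by rw [← mul_add, hc]
    _ ≤ a * d + (b * d + a * (c - d)) := by
        exact add_le_add_right (add_le_add_right (mul_le_mul_left hba _) _) _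
    _ = a * (d + (c - d)) + b * d := by ring
    _ = a * c + b * d := by rw [hc]

lemma chebyshev (μ : Measure ℝ) [IsProbabilityMeasure μ] (f g : ℝ → ℝ≥0∞)
    (hf : Measurable f) (hg : Measurable g)
    (hmono : ∀ x y : ℝ, |x| ≤ |y| → f y ≤ f x ∧ g y ≤ g x) :
    (∫⁻ x, f x ∂μ) * (∫⁻ x, g x ∂μ) ≤ ∫⁻ x, f x * g x ∂μ := by
  have key : ∀ x y : ℝ, f x * g y + f y * g x ≤ f x * g x + f y * g y := by
    intro x y
    rcases le_total |x| |y| with h' | h'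
    · obtain ⟨h1, h2⟩ := hmono x y h'
      exact rearrange h1 h2
    · obtain ⟨h1, h2⟩ := hmono y x h'
      calc f x * g y + f y * g x = f y * g x + f x * g y := by rw [add_comm]
        _ ≤ f y * g y + f x * g x := rearrange h1 h2
        _ = f x * g x + f y * g y := by rw [add_comm]
  have lhs_eq : ∫⁻ x, ∫⁻ y, (f x * g y + f y * g x) ∂μ ∂μ
      = (∫⁻ x, f x ∂μ) * (∫⁻ x, g x ∂μ) + (∫⁻ x, f x ∂μ) * (∫⁻ x, g x ∂μ) := by
    have inner : ∀ x, ∫⁻ y, (f x * g y + f y * g x) ∂μ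
        = f x * (∫⁻ y, g y ∂μ) + (∫⁻ y, f y ∂μ) * g x := by
      intro x
      rw [lintegral_add_left (hg.const_mul _), lintegral_const_mul _ hg,
        lintegral_mul_const _ hf]
    rw [lintegral_congr inner, lintegral_add_left (hf.mul_const _),
      lintegral_mul_const _ hf, lintegral_const_mul _ hg]
  have rhs_eq : ∫⁻ x, ∫⁻ y, (f x * g x + f y * g y) ∂μ ∂μ
      = (∫⁻ x, f x * g x ∂μ) + (∫⁻ x, f x * g x ∂μ) := by
    have inner : ∀ x, ∫⁻ y, (f x * g x + f y * g y) ∂μ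
        = f x * g x + ∫⁻ y, f y * g y ∂μ := by
      intro x
      rw [lintegral_add_left measurable_const, lintegral_const, measure_univ, mul_one]
    rw [lintegral_congr inner, lintegral_add_right _ measurable_const,
      lintegral_const, measure_univ, mul_one]
  have hle : ∫⁻ x, ∫⁻ y, (f x * g y + f y * g x) ∂μ ∂μ
      ≤ ∫⁻ x, ∫⁻ y, (f x * g x + f y * g y) ∂μ ∂μ :=
    lintegral_mono fun x => lintegral_mono fun y => key x y
  rw [lhs_eq, rhs_eq] at hle
  have h2 : (2:ℝ≥0∞) * ((∫⁻ x, f x ∂μ) * (∫⁻ x, g x ∂μ)) ≤ 2 * ∫⁻ x, f x * g x ∂μ := by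
    rw [two_mul, two_mul]; exact hle
  exact (ENNReal.mul_le_mul_iff_right (by norm_num) (by norm_num)).1 h2

lemma slab_eq_Icc {ρ s κ : ℝ} (hs : 0 < s) (x : ℝ) :
    {y : ℝ | |ρ * x + s * y| ≤ κ} = Set.Icc (-ρ * x / s - κ / s) (-ρ * x / s + κ / s) := by
  ext y
  simp only [Set.mem_setOf_eq, Set.mem_Icc, abs_le]
  have h1 : -ρ * x / s - κ / s = (-ρ * x - κ) / s := by ring
  have h2 : -ρ * x / s + κ / s = (-ρ * x + κ) / s := by ring
  rw [h1, h2, div_le_iff₀ hs, le_div_iff₀ hs]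
  constructor
  · rintro ⟨ha, hb⟩; constructor <;> nlinarith
  · rintro ⟨ha, hb⟩; constructor <;> nlinarith

lemma part3_mid (κ : ℝ) (hκ : 0 < κ) {γ : ℝ} (h0 : 0 < γ) (h1 : γ < 1) :
    (stdGauss {z : ℝ | |z| ≤ κ}) ^ 2 ≤ pairProb κ γ := by
  set a : ℝ := Real.sqrt γ with ha
  set b : ℝ := Real.sqrt (1 - γ) with hb
  have ha2 : a ^ 2 = γ := Real.sq_sqrt h0.le
  have hb2 : b ^ 2 = 1 - γ := Real.sq_sqrt (by linarith)
  have hab : a ^ 2 + b ^ 2 = 1 := by rw [ha2, hb2]; ring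
  have hapos : 0 < a := Real.sqrt_pos.2 h0
  have hbpos : 0 < b := Real.sqrt_pos.2 (by linarith)
  set ρ : ℝ := a ^ 2 - b ^ 2 with hρ
  set s : ℝ := 2 * a * b with hsdef
  have hspos : 0 < s := by positivity
  have hρs : ρ ^ 2 + s ^ 2 = 1 := by
    rw [hρ, hsdef]; nlinarith [hab]
  set T : Set (ℝ × ℝ) := {p : ℝ × ℝ | |p.1| ≤ κ ∧ |ρ * p.1 + s * p.2| ≤ κ} with hT
  have hTm : MeasurableSet T := by
    rw [hT, Set.setOf_and]
    exact (measurableSet_le (by fun_prop) measurable_const).inter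
      (measurableSet_le (by fun_prop) measurable_const)
  have hsetid : {z : ℝ × ℝ | |a * z.1 + b * z.2| ≤ κ ∧ |a * z.1 - b * z.2| ≤ κ}
      = rot a b ⁻¹' T := by
    ext p
    simp only [Set.mem_setOf_eq, Set.mem_preimage, rot, hT]
    have : ρ * (a * p.1 + b * p.2) + s * (b * p.1 - a * p.2) = a * p.1 - b * p.2 := by
      rw [hρ, hsdef]; linear_combination (a * p.1 - b * p.2) * hab
    rw [this]
  have hq : pairProb κ γ = (stdGauss.prod stdGauss) T := by
    rw [pairProb, ← ha, ← hb, hsetid, rot_gauss_preserving hab hTm]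
  -- conditional decomposition
  set f : ℝ → ℝ≥0∞ := Set.indicator {x : ℝ | |x| ≤ κ} (fun _ => 1) with hfdef
  set g : ℝ → ℝ≥0∞ := fun x => stdGauss {y : ℝ | |ρ * x + s * y| ≤ κ} with hgdef
  have hT' : MeasurableSet {p : ℝ × ℝ | |ρ * p.1 + s * p.2| ≤ κ} :=
    measurableSet_le (by fun_prop) measurable_const
  have hgm : Measurable g := measurable_measure_prodMk_left hT'
  have hfm : Measurable f := measurable_const.indicator (measurableSet_absle κ)
  have hdecomp : (stdGauss.prod stdGauss) T = ∫⁻ x, f x * g x ∂stdGauss := by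
    rw [Measure.prod_apply hTm]
    apply lintegral_congr
    intro x
    by_cases hx : |x| ≤ κ
    · have : Prod.mk x ⁻¹' T = {y : ℝ | |ρ * x + s * y| ≤ κ} := by
        ext y; simp only [Set.mem_preimage, hT, Set.mem_setOf_eq, hx, true_and]
      rw [this, hfdef, Set.indicator_of_mem (show x ∈ {x : ℝ | |x| ≤ κ} from hx), one_mul, hgdef]
    · have : Prod.mk x ⁻¹' T = (∅ : Set ℝ) := by
        ext y; simp only [Set.mem_preimage, hT, Set.mem_setOf_eq, hx, false_and,
          Set.mem_empty_iff_false]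
      rw [this, measure_empty, hfdef,
        Set.indicator_of_notMem (show x ∉ {x : ℝ | |x| ≤ κ} from hx), zero_mul]
  have hfint : ∫⁻ x, f x ∂stdGauss = stdGauss {z : ℝ | |z| ≤ κ} := by
    rw [hfdef, lintegral_indicator (measurableSet_absle κ), setLIntegral_one]
  have hgint : ∫⁻ x, g x ∂stdGauss = stdGauss {z : ℝ | |z| ≤ κ} := by
    have : ∫⁻ x, g x ∂stdGauss
        = (stdGauss.prod stdGauss) {p : ℝ × ℝ | |ρ * p.1 + s * p.2| ≤ κ} := by
      rw [Measure.prod_apply hT']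
      rfl
    rw [this, marginal hρs]
  have hmono : ∀ x y : ℝ, |x| ≤ |y| → f y ≤ f x ∧ g y ≤ g x := by
    intro x y hxy
    constructor
    · by_cases hy : |y| ≤ κ
      · have hx : |x| ≤ κ := le_trans hxy hy
        rw [hfdef, Set.indicator_of_mem (show y ∈ {x : ℝ | |x| ≤ κ} from hy),
          Set.indicator_of_mem (show x ∈ {x : ℝ | |x| ≤ κ} from hx)]
      · rw [hfdef, Set.indicator_of_notMem (show y ∉ {x : ℝ | |x| ≤ κ} from hy)]
        exact zero_le
    · rw [hgdef]
      simp only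
      rw [slab_eq_Icc hspos x, slab_eq_Icc hspos y]
      refine icc_center_anti (by positivity) ?_
      rw [abs_div, abs_div]
      refine div_le_div_of_nonneg_right ?_ (abs_nonneg s)
      rw [abs_mul, abs_mul]
      exact mul_le_mul_of_nonneg_left hxy (abs_nonneg _)
  calc (stdGauss {z : ℝ | |z| ≤ κ}) ^ 2
      = (∫⁻ x, f x ∂stdGauss) * (∫⁻ x, g x ∂stdGauss) := by rw [hfint, hgint, sq]
    _ ≤ ∫⁻ x, f x * g x ∂stdGauss := chebyshev stdGauss f g hfm hgm hmono
    _ = pairProb κ γ := by rw [← hdecomp, ← hq]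

lemma sq_le_self (κ : ℝ) : (stdGauss {z : ℝ | |z| ≤ κ}) ^ 2 ≤ stdGauss {z : ℝ | |z| ≤ κ} := by
  rw [sq]
  calc stdGauss {z : ℝ | |z| ≤ κ} * stdGauss {z : ℝ | |z| ≤ κ}
      ≤ stdGauss {z : ℝ | |z| ≤ κ} * 1 := mul_le_mul_right prob_le_one _
    _ = stdGauss {z : ℝ | |z| ≤ κ} := mul_one _

lemma part3_zero (κ : ℝ) : (stdGauss {z : ℝ | |z| ≤ κ}) ^ 2 ≤ pairProb κ 0 := by
  refine le_trans (sq_le_self κ) (le_of_eq ?_)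
  rw [pairProb]
  have hset : {z : ℝ × ℝ |
      |Real.sqrt 0 * z.1 + Real.sqrt (1 - 0) * z.2| ≤ κ ∧
      |Real.sqrt 0 * z.1 - Real.sqrt (1 - 0) * z.2| ≤ κ}
      = (Set.univ : Set ℝ) ×ˢ {z : ℝ | |z| ≤ κ} := by
    ext p
    simp [abs_neg]
  rw [hset, Measure.prod_prod, measure_univ, one_mul]

lemma part3_one (κ : ℝ) : (stdGauss {z : ℝ | |z| ≤ κ}) ^ 2 ≤ pairProb κ 1 := by
  refine le_trans (sq_le_self κ) (le_of_eq ?_)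
  rw [pairProb]
  have hset : {z : ℝ × ℝ |
      |Real.sqrt 1 * z.1 + Real.sqrt (1 - 1) * z.2| ≤ κ ∧
      |Real.sqrt 1 * z.1 - Real.sqrt (1 - 1) * z.2| ≤ κ}
      = {z : ℝ | |z| ≤ κ} ×ˢ (Set.univ : Set ℝ) := by
    ext p
    simp
  rw [hset, Measure.prod_prod, measure_univ, mul_one]

theorem stmt3 (κ : ℝ) (hκ : 0 < κ) :
    pairProb κ (1/2) = (stdGauss {z : ℝ | |z| ≤ κ}) ^ 2 ∧
    (0 : ℝ≥0∞) < (stdGauss {z : ℝ | |z| ≤ κ}) ^ 2 ∧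
    ∀ γ ∈ Set.Icc (0:ℝ) 1, (stdGauss {z : ℝ | |z| ≤ κ}) ^ 2 ≤ pairProb κ γ := by
  refine ⟨part1 κ, ?_, ?_⟩
  · have h := part2 κ hκ
    rw [sq]
    exact ENNReal.mul_pos h.ne' h.ne'
  · intro γ hγ
    obtain ⟨hγ0, hγ1⟩ := hγ
    rcases eq_or_lt_of_le hγ0 with h | h
    · rw [← h]; exact part3_zero κ
    · rcases eq_or_lt_of_le hγ1 with h' | h'
      · rw [h']; exact part3_one κ
      · exact part3_mid κ hκ h h'
end

section
/- There is an absolute constant C such that for all n sufficiently large and all integers k with |k| ≤ √n · log n and (n+k)/2 ∈ ℤ, one has C(n, (n+k)/2) = (2^n √2 / √(π n)) · exp(-k²/(2n) ± n^{-1/2}), i.e., the ratio of the two sides is exp of a quantity bounded in absolute value by n^{-1/2}. -/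
open Real Filter Stirling Nat

section aux

lemma core_taylor' (t : ℝ) (ht : |t| ≤ 1/2) :
    |(1+t) * Real.log (1+t) + (1-t) * Real.log (1-t) - t^2| ≤ 7 * t^4 := by
  have h1 : |t| < 1 := lt_of_le_of_lt ht (by norm_num)
  have h2 : |(-t)| < 1 := by rwa [abs_neg]
  have E2 := Real.abs_log_sub_add_sum_range_le h1 3
  have E1 := Real.abs_log_sub_add_sum_range_le h2 3
  simp only [Finset.sum_range_succ, Finset.sum_range_zero] at E1 E2
  norm_num at E1 E2
  have hd : |t|^4 / (1 - |t|) ≤ 2 * t^4 := by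
    have h3 : (0:ℝ) < 1 - |t| := by linarith
    rw [div_le_iff₀ h3]
    have h4 : |t|^4 = t^4 := by
      rw [← abs_pow]; exact abs_of_nonneg (by positivity)
    nlinarith [abs_nonneg t, pow_nonneg (abs_nonneg t) 4]
  have B2 : |t + t^2/2 + t^3/3 + Real.log (1-t)| ≤ 2*t^4 := E2.trans hd
  have B1 : |(-t) + t^2/2 - t^3/3 + Real.log (1+t)| ≤ 2*t^4 := by
    rw [show (-t) + t^2/2 - t^3/3 + Real.log (1+t) = -t + t^2/2 + (-t)^3/3 + Real.log (1+t) by ring]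
    exact E1.trans hd
  set e1 := (-t) + t^2/2 - t^3/3 + Real.log (1+t) with he1
  set e2 := t + t^2/2 + t^3/3 + Real.log (1-t) with he2
  have hL1 : Real.log (1+t) = t - t^2/2 + t^3/3 + e1 := by rw [he1]; ring
  have hL2 : Real.log (1-t) = -t - t^2/2 - t^3/3 + e2 := by rw [he2]; ring
  clear_value e1 e2
  clear E1 E2 he1 he2
  rw [hL1, hL2]
  have key : (1+t) * (t - t^2/2 + t^3/3 + e1) + (1-t) * (-t - t^2/2 - t^3/3 + e2) - t^2
      = (2/3) * t^4 + (1+t)*e1 + (1-t)*e2 := by ring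
  rw [key]
  have habs1 := abs_le.mp B1
  have habs2 := abs_le.mp B2
  have habst := abs_le.mp ht
  rw [abs_le]
  have p1 : (0:ℝ) ≤ 1 + t := by linarith [habst.1]
  have p2 : (0:ℝ) ≤ 1 - t := by linarith [habst.2]
  have t4 : (0:ℝ) ≤ t^4 := by positivity
  have h1u := mul_le_mul_of_nonneg_left habs1.2 p1
  have h1l := mul_le_mul_of_nonneg_left habs1.1 p1
  have h2u := mul_le_mul_of_nonneg_left habs2.2 p2
  have h2l := mul_le_mul_of_nonneg_left habs2.1 p2
  have ht4u := mul_le_mul_of_nonneg_right habst.2 t4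
  have ht4l := mul_le_mul_of_nonneg_right habst.1 t4
  constructor <;> linarith [h1u, h1l, h2u, h2l, ht4u, ht4l, t4]

lemma stirling_lower' (n : ℕ) : Real.sqrt Real.pi ≤ stirlingSeq (n+1) := by
  have ha : Antitone (stirlingSeq ∘ Nat.succ) := stirlingSeq'_antitone
  have ht : Tendsto (stirlingSeq ∘ Nat.succ) atTop (nhds (Real.sqrt Real.pi)) :=
    tendsto_stirlingSeq_sqrt_pi.comp (tendsto_add_atTop_nat 1)
  exact ha.le_of_tendsto ht n

lemma stirling_telescope (p N : ℕ) :
    Real.log (stirlingSeq (p+2)) - Real.log (stirlingSeq (p+2+N)) ≤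
      1/4 * (1/(p+1 : ℝ) - 1/((p:ℝ)+1+N)) := by
  induction N with
  | zero => simp
  | succ N ih =>
    have step := log_stirlingSeq_sub_log_stirlingSeq_succ (p+1+N+1)
    -- step : log (stirlingSeq (p+1+N+1)) - log (stirlingSeq (p+1+N+2)) ≤ 1/(4 * (↑(p+1+N+1))^2)
    have hidx1 : p+1+N+1 = p+2+N := by ring
    have hidx2 : p+2+N+1 = p+2+(N+1) := by ring
    rw [hidx1, hidx2] at step
    have hcast : ((p+2+N : ℕ) : ℝ) = (p:ℝ)+1+N+1 := by push_cast; ring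
    rw [hcast] at step
    have hb : 1/(4 * ((p:ℝ)+1+N+1)^2) ≤ 1/4 * (1/((p:ℝ)+1+N) - 1/((p:ℝ)+1+N+1)) := by
      have h0 : (0:ℝ) < (p:ℝ)+1+N := by positivity
      have h1 : (0:ℝ) < (p:ℝ)+1+N+1 := by positivity
      have e : 1/((p:ℝ)+1+N) - 1/((p:ℝ)+1+N+1) = 1/(((p:ℝ)+1+N) * ((p:ℝ)+1+N+1)) := by
        field_simp; ring
      rw [e]
      calc 1/(4 * ((p:ℝ)+1+N+1)^2) ≤ 1/(4 * (((p:ℝ)+1+N) * ((p:ℝ)+1+N+1))) := by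
            gcongr
            nlinarith
        _ = 1/4 * (1/(((p:ℝ)+1+N) * ((p:ℝ)+1+N+1))) := by rw [_root_.div_mul_div_comm, one_mul]
    have : ((N:ℝ)+1) = ((N+1 : ℕ) : ℝ) := by push_cast; ring
    calc Real.log (stirlingSeq (p+2)) - Real.log (stirlingSeq (p+2+(N+1)))
        = (Real.log (stirlingSeq (p+2)) - Real.log (stirlingSeq (p+2+N)))
          + (Real.log (stirlingSeq (p+2+N)) - Real.log (stirlingSeq (p+2+(N+1)))) := by ring
      _ ≤ 1/4 * (1/(p+1 : ℝ) - 1/((p:ℝ)+1+N)) + 1/(4 * ((p:ℝ)+1+N+1)^2) := by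
          exact add_le_add ih step
      _ ≤ 1/4 * (1/(p+1 : ℝ) - 1/((p:ℝ)+1+N)) + 1/4 * (1/((p:ℝ)+1+N) - 1/((p:ℝ)+1+N+1)) := by
          linarith
      _ = 1/4 * (1/(p+1 : ℝ) - 1/((p:ℝ)+1+(N+1:ℕ))) := by push_cast; ring

lemma stirling_upper' (p : ℕ) :
    Real.log (stirlingSeq (p+2)) ≤ Real.log (Real.sqrt Real.pi) + 1/(4*((p:ℝ)+1)) := by
  have hlim : Tendsto (fun N => Real.log (stirlingSeq (p+2+N))) atTop
      (nhds (Real.log (Real.sqrt Real.pi))) := by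
    have h1 : Tendsto (fun N => stirlingSeq (p+2+N)) atTop (nhds (Real.sqrt Real.pi)) := by
      refine tendsto_stirlingSeq_sqrt_pi.comp ?_
      exact tendsto_atTop_atTop_of_monotone (fun a b h => by omega) (fun b => ⟨b, by omega⟩)
    have hpos : (0:ℝ) < Real.sqrt Real.pi := Real.sqrt_pos.mpr Real.pi_pos
    exact ((Real.continuousAt_log (ne_of_gt hpos)).tendsto.comp h1)
  have key : ∀ N, Real.log (stirlingSeq (p+2)) - 1/4 * (1/((p:ℝ)+1)) ≤
      Real.log (stirlingSeq (p+2+N)) := by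
    intro N
    have := stirling_telescope p N
    have hN : (0:ℝ) ≤ 1/((p:ℝ)+1+N) := by positivity
    linarith
  have h2 := ge_of_tendsto hlim (Filter.Eventually.of_forall key)
  have h3 : (1:ℝ)/4 * (1/((p:ℝ)+1)) = 1/(4*((p:ℝ)+1)) := by rw [_root_.div_mul_div_comm, one_mul]
  linarith [h2]

lemma growth' (x : ℝ) (hx : (1048576:ℝ)^4 ≤ x) :
    16 * (Real.log x)^4 ≤ Real.sqrt x ∧ 2 * Real.log x ≤ Real.sqrt x := by
  have hx0 : (0:ℝ) < x := lt_of_lt_of_le (by positivity) hx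
  set u := Real.sqrt (Real.sqrt x) with hu_def
  set s := Real.sqrt (Real.sqrt u) with hs_def
  have hsx : (0:ℝ) ≤ Real.sqrt x := Real.sqrt_nonneg x
  have hu2 : u^2 = Real.sqrt x := Real.sq_sqrt hsx
  have hu0 : (0:ℝ) ≤ u := Real.sqrt_nonneg _
  have hs2 : s^2 = Real.sqrt u := Real.sq_sqrt (Real.sqrt_nonneg u)
  have hs4 : s^4 = u := by
    have : s^4 = (s^2)^2 := by ring
    rw [this, hs2, Real.sq_sqrt hu0]
  -- u ≥ 1048576
  have hub : (1048576:ℝ) ≤ u := by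
    have h1 : Real.sqrt ((1048576:ℝ)^4) ≤ Real.sqrt x := Real.sqrt_le_sqrt hx
    have h2 : Real.sqrt ((1048576:ℝ)^4) = (1048576:ℝ)^2 := by
      rw [show ((1048576:ℝ)^4) = ((1048576:ℝ)^2)^2 by ring]
      exact Real.sqrt_sq (by positivity)
    have h3 : Real.sqrt ((1048576:ℝ)^2) ≤ u := by
      rw [hu_def]
      exact Real.sqrt_le_sqrt (by rw [← h2]; exact h1)
    rwa [Real.sqrt_sq (by norm_num : (0:ℝ) ≤ (1048576:ℝ))] at h3
  have hs1 : (1:ℝ) ≤ s := by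
    have : (1:ℝ) ≤ u := by linarith
    have h1 : (1:ℝ) ≤ Real.sqrt u := Real.one_le_sqrt.mpr this
    exact Real.one_le_sqrt.mpr h1
  -- log x = 4 * log u, log u = 4 * log s
  have hlu : Real.log x = 4 * Real.log u := by
    rw [hu_def, Real.log_sqrt hsx, Real.log_sqrt (le_of_lt hx0)]
    ring
  have hls : Real.log u = 4 * Real.log s := by
    rw [hs_def, Real.log_sqrt (Real.sqrt_nonneg u), Real.log_sqrt hu0]
    ring
  have hlogs_nonneg : 0 ≤ Real.log s := Real.log_nonneg hs1
  have hlogs_le : Real.log s ≤ s := by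
    have := Real.log_le_sub_one_of_pos (lt_of_lt_of_le one_pos hs1)
    linarith
  have hkey : (Real.log x)^4 ≤ 65536 * u := by
    have h1 : (Real.log x)^4 = 65536 * (Real.log s)^4 := by
      rw [hlu, hls]; ring
    have h2 : (Real.log s)^4 ≤ s^4 := pow_le_pow_left₀ hlogs_nonneg hlogs_le 4
    rw [h1, ← hs4]
    nlinarith [h2]
  have huu : (1048576:ℝ) * u ≤ u * u := mul_le_mul_of_nonneg_right hub hu0
  have hu2' : u^2 = u * u := pow_two u
  constructor
  · rw [← hu2, hu2']
    linarith [hkey, huu]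
  · rw [← hu2, hu2']
    have hlogu : Real.log u ≤ u := by
      have := Real.log_le_sub_one_of_pos (lt_of_lt_of_le (by norm_num) hub)
      linarith
    have h8 : Real.log x ≤ 4 * u := by rw [hlu]; linarith
    linarith [huu, hu0]

lemma r_bounds (n : ℕ) (hn : 2 ≤ n) :
    0 ≤ Real.log (stirlingSeq n) - Real.log (Real.sqrt Real.pi) ∧
    Real.log (stirlingSeq n) - Real.log (Real.sqrt Real.pi) ≤ 1/(2*(n:ℝ)) := by
  obtain ⟨p, rfl⟩ : ∃ p, n = p + 2 := ⟨n - 2, by omega⟩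
  have hsp : (0:ℝ) < Real.sqrt Real.pi := Real.sqrt_pos.mpr Real.pi_pos
  constructor
  · have h1 : Real.sqrt Real.pi ≤ stirlingSeq (p+2) := stirling_lower' (p+1)
    have h2 := Real.log_le_log hsp h1
    linarith
  · have h2 := stirling_upper' p
    have h3 : 1/(4*((p:ℝ)+1)) ≤ 1/(2*((p:ℝ)+2)) := by
      rw [div_le_div_iff₀ (by positivity) (by positivity)]
      nlinarith [Nat.cast_nonneg (α := ℝ) p]
    have h4 : ((p+2:ℕ):ℝ) = (p:ℝ)+2 := by push_cast; ring
    rw [h4]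
    linarith

lemma log_factorial (n : ℕ) (hn : 1 ≤ n) :
    Real.log (n ! : ℝ) = (Real.log (stirlingSeq n) - Real.log (Real.sqrt Real.pi))
      + (1/2) * Real.log Real.pi + (1/2) * Real.log 2 + (1/2) * Real.log n
      + n * Real.log n - n := by
  have h := log_stirlingSeq_formula n
  have hn0 : (0:ℝ) < n := by exact_mod_cast hn
  have h2n : Real.log (2*(n:ℝ)) = Real.log 2 + Real.log n := Real.log_mul two_ne_zero hn0.ne'
  have hne : Real.log ((n:ℝ)/Real.exp 1) = Real.log n - 1 := by
    rw [Real.log_div hn0.ne' (Real.exp_ne_zero 1), Real.log_exp]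
  have hsp : Real.log (Real.sqrt Real.pi) = Real.log Real.pi / 2 :=
    Real.log_sqrt Real.pi_pos.le
  rw [h2n, hne] at h
  rw [hsp]
  nlinarith [h]

end aux

set_option maxHeartbeats 2000000 in
theorem stmt9 :
    ∃ N : ℕ, ∀ n : ℕ, N ≤ n → ∀ k : ℤ, ∀ m : ℕ,
      (2 * (m : ℤ) = (n : ℤ) + k) →
      |(k : ℝ)| ≤ Real.sqrt n * Real.log n →
      ∃ ε : ℝ, |ε| ≤ (n : ℝ) ^ (-(1 : ℝ) / 2) ∧
        (n.choose m : ℝ) =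
          2 ^ n * Real.sqrt 2 / Real.sqrt (Real.pi * n) *
            Real.exp (-(k : ℝ) ^ 2 / (2 * n) + ε) := by
  refine ⟨1048576^4, fun n hn k m hm hk => ?_⟩
  have hnR : ((1048576:ℝ)^4) ≤ (n:ℝ) := by exact_mod_cast hn
  have hx0 : (0:ℝ) < n := lt_of_lt_of_le (by positivity) hnR
  have hsqn0 : (0:ℝ) < Real.sqrt n := Real.sqrt_pos.mpr hx0
  have hsq : Real.sqrt (n:ℝ) * Real.sqrt n = n := Real.mul_self_sqrt hx0.le
  obtain ⟨G1, G2⟩ := growth' n hnR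
  have hL1 : (1:ℝ) ≤ Real.log n := by
    rw [← Real.log_exp 1]
    refine Real.log_le_log (Real.exp_pos 1) ?_
    have h1 := Real.exp_one_lt_d9
    have h2 : (2.7182818286:ℝ) ≤ (n:ℝ) := le_trans (by norm_num) hnR
    linarith
  have hLpos : (0:ℝ) < Real.log n := by linarith
  -- |k| ≤ n/2
  have hk2 : |(k:ℝ)| ≤ (n:ℝ)/2 := by
    calc |(k:ℝ)| ≤ Real.sqrt n * Real.log n := hk
      _ ≤ Real.sqrt n * (Real.sqrt n / 2) := by
          apply mul_le_mul_of_nonneg_left _ hsqn0.le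
          linarith
      _ = (n:ℝ)/2 := by rw [show Real.sqrt (n:ℝ) * (Real.sqrt n / 2) = (Real.sqrt n * Real.sqrt n)/2 by ring, hsq]
  obtain ⟨hkl, hku⟩ := abs_le.mp hk2
  have hmR : 2*(m:ℝ) = (n:ℝ) + k := by exact_mod_cast hm
  have hA4 : (n:ℝ)/4 ≤ m := by linarith
  have hmleR : (m:ℝ) ≤ (n:ℝ) := by linarith
  have hmn : m ≤ n := by exact_mod_cast hmleR
  have hbR : ((n - m : ℕ):ℝ) = (n:ℝ) - m := by
    push_cast [Nat.cast_sub hmn]; ring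
  set b := n - m with hb_def
  have hB4 : (n:ℝ)/4 ≤ (b:ℝ) := by rw [hbR]; linarith
  have hn8 : (8:ℝ) ≤ (n:ℝ) := le_trans (by norm_num) hnR
  have hm2 : 2 ≤ m := by
    have : (2:ℝ) ≤ (m:ℝ) := by linarith
    exact_mod_cast this
  have hb2 : 2 ≤ b := by
    have : (2:ℝ) ≤ (b:ℝ) := by linarith
    exact_mod_cast this
  have hn2 : 2 ≤ n := by
    have : (2:ℝ) ≤ (n:ℝ) := by linarith
    exact_mod_cast this
  have hA0 : (0:ℝ) < m := by linarith
  have hB0 : (0:ℝ) < (b:ℝ) := by linarith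
  have hchoosePos : (0:ℝ) < (n.choose m : ℝ) := by
    exact_mod_cast Nat.choose_pos hmn
  have hsqpin0 : (0:ℝ) < Real.sqrt (Real.pi * n) := Real.sqrt_pos.mpr (by positivity)
  have hsq2 : (0:ℝ) < Real.sqrt 2 := Real.sqrt_pos.mpr (by norm_num)
  have h2pow : (0:ℝ) < (2:ℝ)^n := by positivity
  set X := ((n.choose m : ℝ) * Real.sqrt (Real.pi * n)) / ((2:ℝ)^n * Real.sqrt 2) with hX_def
  have hXpos : 0 < X := by
    apply div_pos (mul_pos hchoosePos hsqpin0) (mul_pos h2pow hsq2)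
  refine ⟨Real.log X + (k:ℝ)^2/(2*n), ?_, ?_⟩
  · -- bound
    set t : ℝ := (k:ℝ)/(n:ℝ) with ht_def
    have hAB : (m:ℝ) + (b:ℝ) = (n:ℝ) := by rw [hbR]; ring
    have h2B : 2*(b:ℝ) = (n:ℝ) - k := by rw [hbR]; linarith
    have ht12 : |t| ≤ 1/2 := by
      rw [ht_def, abs_div, abs_of_pos hx0, div_le_iff₀ hx0]
      linarith
    obtain ⟨htl, htu⟩ := abs_le.mp ht12
    have h1pt : (0:ℝ) < 1 + t := by linarith
    have h1mt : (0:ℝ) < 1 - t := by linarith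
    -- log(1±t) in terms of log m, log b, log n
    have hlog1p : Real.log (1 + t) = Real.log 2 + Real.log (m:ℝ) - Real.log (n:ℝ) := by
      have e : (1:ℝ) + t = 2*(m:ℝ)/(n:ℝ) := by
        rw [ht_def]; field_simp; linarith
      rw [e, Real.log_div (by positivity) hx0.ne', Real.log_mul two_ne_zero hA0.ne']
    have hlog1m : Real.log (1 - t) = Real.log 2 + Real.log (b:ℝ) - Real.log (n:ℝ) := by
      have e : (1:ℝ) - t = 2*(b:ℝ)/(n:ℝ) := by
        rw [ht_def]; field_simp; linarith
      rw [e, Real.log_div (by positivity) hx0.ne', Real.log_mul two_ne_zero hB0.ne']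
    -- log choose
    have hfac : (n.choose m : ℝ) = (n ! : ℝ) / ((m ! : ℝ) * (b ! : ℝ)) := by
      have hnat := Nat.choose_mul_factorial_mul_factorial hmn
      have hcast : ((n.choose m : ℕ) : ℝ) * (m ! : ℝ) * (b ! : ℝ) = (n ! : ℝ) := by
        exact_mod_cast hnat
      rw [eq_div_iff (by positivity)]
      linear_combination hcast
    have hlchoose : Real.log (n.choose m : ℝ)
        = Real.log (n ! : ℝ) - Real.log (m ! : ℝ) - Real.log (b ! : ℝ) := by
      rw [hfac, Real.log_div (by positivity) (by positivity),
        Real.log_mul (by positivity) (by positivity)]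
      ring
    have hfn := log_factorial n (by omega)
    have hfm := log_factorial m (by omega)
    have hfb := log_factorial b (by omega)
    -- log X
    have hlogX : Real.log X = Real.log (n.choose m : ℝ)
        + (1/2) * Real.log Real.pi + (1/2) * Real.log (n:ℝ)
        - (n:ℝ) * Real.log 2 - (1/2) * Real.log 2 := by
      rw [hX_def, Real.log_div (by positivity) (by positivity),
        Real.log_mul hchoosePos.ne' hsqpin0.ne',
        Real.log_mul h2pow.ne' hsq2.ne',
        Real.log_sqrt (by positivity), Real.log_sqrt (by norm_num),
        Real.log_mul Real.pi_pos.ne' hx0.ne', Real.log_pow]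
      push_cast
      ring
    -- abbreviations
    set rn := Real.log (stirlingSeq n) - Real.log (Real.sqrt Real.pi) with hrn
    set ra := Real.log (stirlingSeq m) - Real.log (Real.sqrt Real.pi) with hra
    set rb := Real.log (stirlingSeq b) - Real.log (Real.sqrt Real.pi) with hrb
    -- linear-combination identities
    have hcomb1 : (m:ℝ) * Real.log (n:ℝ) + (b:ℝ) * Real.log (n:ℝ)
        = (n:ℝ) * Real.log (n:ℝ) := by rw [← hAB]; ring
    have hcomb2 : (m:ℝ) * Real.log 2 + (b:ℝ) * Real.log 2
        = (n:ℝ) * Real.log 2 := by rw [← hAB]; ring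
    have hAlog1p : (m:ℝ) * Real.log (1+t)
        = (m:ℝ) * Real.log 2 + (m:ℝ) * Real.log (m:ℝ) - (m:ℝ) * Real.log (n:ℝ) := by
      rw [hlog1p]; ring
    have hBlog1m : (b:ℝ) * Real.log (1-t)
        = (b:ℝ) * Real.log 2 + (b:ℝ) * Real.log (b:ℝ) - (b:ℝ) * Real.log (n:ℝ) := by
      rw [hlog1m]; ring
    -- epsilon identity
    have hEps : Real.log X + (k:ℝ)^2/(2*n)
        = (rn - ra - rb) - (1/2) * (Real.log (1+t) + Real.log (1-t))
          - ((m:ℝ) * Real.log (1+t) + (b:ℝ) * Real.log (1-t)) + (k:ℝ)^2/(2*n) := by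
      rw [hlogX, hlchoose, hfn, hfm, hfb, hlog1p, hlog1m]
      linarith [hcomb1, hcomb2, hAB, hAlog1p, hBlog1m]
    rw [hEps]
    -- bound each piece
    obtain ⟨hrn0, hrnU⟩ := r_bounds n hn2
    obtain ⟨hra0, hraU⟩ := r_bounds m hm2
    obtain ⟨hrb0, hrbU⟩ := r_bounds b hb2
    rw [← hrn] at hrn0 hrnU
    rw [← hra] at hra0 hraU
    rw [← hrb] at hrb0 hrbU
    clear_value rn ra rb
    have hraU' : ra ≤ 2/(n:ℝ) := by
      refine hraU.trans ?_
      rw [div_le_div_iff₀ (by positivity) hx0]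
      linarith
    have hrbU' : rb ≤ 2/(n:ℝ) := by
      refine hrbU.trans ?_
      rw [div_le_div_iff₀ (by positivity) hx0]
      linarith
    have hninv : (0:ℝ) ≤ 1/(n:ℝ) := by positivity
    have h12 : (1:ℝ)/2 * (1/(n:ℝ)) = 1/(2*(n:ℝ)) := by
      rw [_root_.div_mul_div_comm, one_mul]
    have hR : |rn - ra - rb| ≤ 5/(n:ℝ) := by
      rw [abs_le]
      constructor
      all_goals {
        have e2 : 2/(n:ℝ) = 2*(1/(n:ℝ)) := by ring
        have e5 : 5/(n:ℝ) = 5*(1/(n:ℝ)) := by ring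
        linarith only [hrn0, hra0, hrb0, hrnU, hraU', hrbU', hninv, h12, e2, e5] }
    -- |log(1+t) + log(1-t)| ≤ 4 t^2
    have hLsum : |Real.log (1+t) + Real.log (1-t)| ≤ 4 * t^2 := by
      have hup : Real.log (1+t) + Real.log (1-t) ≤ 0 := by
        have h1 := Real.log_le_sub_one_of_pos h1pt
        have h2 := Real.log_le_sub_one_of_pos h1mt
        linarith
      have hlow1 : -Real.log (1+t) ≤ -t + 2*t^2 := by
        have h1 : Real.log ((1+t)⁻¹) ≤ (1+t)⁻¹ - 1 :=
          Real.log_le_sub_one_of_pos (by positivity)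
        rw [Real.log_inv] at h1
        have h2 : (1+t)⁻¹ - 1 = -t/(1+t) := by field_simp; ring
        rw [h2] at h1
        have h3 : -t/(1+t) ≤ -t + 2*t^2 := by
          rw [div_le_iff₀ h1pt]
          have h4 : (0:ℝ) ≤ t^2*(1+2*t) := mul_nonneg (sq_nonneg t) (by linarith)
          linarith [h4]
        linarith
      have hlow2 : -Real.log (1-t) ≤ t + 2*t^2 := by
        have h1 : Real.log ((1-t)⁻¹) ≤ (1-t)⁻¹ - 1 :=
          Real.log_le_sub_one_of_pos (by positivity)
        rw [Real.log_inv] at h1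
        have h2 : (1-t)⁻¹ - 1 = t/(1-t) := by field_simp; ring
        rw [h2] at h1
        have h3 : t/(1-t) ≤ t + 2*t^2 := by
          rw [div_le_iff₀ h1mt]
          have h4 : (0:ℝ) ≤ t^2*(1-2*t) := mul_nonneg (sq_nonneg t) (by linarith)
          linarith [h4]
        linarith
      rw [abs_le]
      constructor
      · linarith [hlow1, hlow2]
      · linarith [hup, sq_nonneg t]
    -- main term
    have h2A : 2*(m:ℝ) = (n:ℝ)*(1+t) := by
      rw [ht_def]; field_simp; linarith
    have h2B' : 2*(b:ℝ) = (n:ℝ)*(1-t) := by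
      rw [ht_def]; field_simp; linarith
    have ht2 : (n:ℝ)/2 * t^2 = (k:ℝ)^2/(2*n) := by
      rw [ht_def, div_pow, _root_.div_mul_div_comm,
        div_eq_div_iff (by positivity) (by positivity)]
      ring
    have hmain_eq : (m:ℝ) * Real.log (1+t) + (b:ℝ) * Real.log (1-t) - (k:ℝ)^2/(2*n)
        = (n:ℝ)/2 * ((1+t) * Real.log (1+t) + (1-t) * Real.log (1-t) - t^2) := by
      linear_combination (Real.log (1+t)/2) * h2A + (Real.log (1-t)/2) * h2B' + ht2
    have hcore := core_taylor' t ht12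
    have hmain : |(m:ℝ) * Real.log (1+t) + (b:ℝ) * Real.log (1-t) - (k:ℝ)^2/(2*n)|
        ≤ (n:ℝ)/2 * (7 * t^4) := by
      rw [hmain_eq, abs_mul, abs_of_pos (by positivity : (0:ℝ) < (n:ℝ)/2)]
      exact mul_le_mul_of_nonneg_left hcore (by positivity)
    -- k-power bounds
    have hk2' : (k:ℝ)^2 ≤ (n:ℝ) * (Real.log n)^2 := by
      have h1 : |(k:ℝ)|^2 ≤ (Real.sqrt n * Real.log n)^2 :=
        pow_le_pow_left₀ (abs_nonneg _) hk 2
      rw [sq_abs] at h1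
      calc (k:ℝ)^2 ≤ (Real.sqrt n * Real.log n)^2 := h1
        _ = (Real.sqrt n * Real.sqrt n) * (Real.log n)^2 := by ring
        _ = (n:ℝ) * (Real.log n)^2 := by rw [hsq]
    have hk4 : (k:ℝ)^4 ≤ (n:ℝ)^2 * (Real.log n)^4 := by
      have h1 : ((k:ℝ)^2)^2 ≤ ((n:ℝ) * (Real.log n)^2)^2 :=
        pow_le_pow_left₀ (sq_nonneg _) hk2' 2
      calc (k:ℝ)^4 = ((k:ℝ)^2)^2 := by ring
        _ ≤ ((n:ℝ) * (Real.log n)^2)^2 := h1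
        _ = (n:ℝ)^2 * (Real.log n)^4 := by ring
    -- t powers in terms of k
    have htt2 : t^2 = (k:ℝ)^2/(n:ℝ)^2 := by rw [ht_def]; field_simp
    have htt4 : t^4 = (k:ℝ)^4/(n:ℝ)^4 := by rw [ht_def]; field_simp
    -- combine
    have hq1 : t^2 ≤ (Real.log n)^2 / (n:ℝ) := by
      rw [htt2, div_le_div_iff₀ (by positivity) hx0]
      calc (k:ℝ)^2 * (n:ℝ) ≤ ((n:ℝ) * (Real.log n)^2) * (n:ℝ) :=
            mul_le_mul_of_nonneg_right hk2' hx0.le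
        _ = (Real.log n)^2 * (n:ℝ)^2 := by ring
    have hb1 : (1/2) * |Real.log (1+t) + Real.log (1-t)| ≤ 2 * (Real.log n)^2 / n := by
      have h5 : 2 * t^2 ≤ 2 * ((Real.log n)^2 / (n:ℝ)) :=
        mul_le_mul_of_nonneg_left hq1 (by norm_num)
      have h6 : 2 * ((Real.log n)^2 / (n:ℝ)) = 2 * (Real.log n)^2 / n := by
        rw [mul_div_assoc]
      linarith [hLsum]
    have hq2 : t^4 ≤ (Real.log n)^4 / (n:ℝ)^2 := by
      rw [htt4, div_le_div_iff₀ (by positivity) (by positivity)]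
      calc (k:ℝ)^4 * (n:ℝ)^2 ≤ ((n:ℝ)^2 * (Real.log n)^4) * (n:ℝ)^2 :=
            mul_le_mul_of_nonneg_right hk4 (by positivity)
        _ = (Real.log n)^4 * (n:ℝ)^4 := by ring
    have hb2' : (n:ℝ)/2 * (7 * t^4) ≤ (7/2) * (Real.log n)^4 / n := by
      have h5 := mul_le_mul_of_nonneg_left hq2 (by positivity : (0:ℝ) ≤ (7/2) * (n:ℝ))
      have h6 : (7/2) * (n:ℝ) * ((Real.log n)^4 / (n:ℝ)^2) = (7/2) * (Real.log n)^4 / n := by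
        rw [eq_div_iff hx0.ne']
        field_simp
      calc (n:ℝ)/2 * (7 * t^4) = (7/2) * (n:ℝ) * t^4 := by ring
        _ ≤ (7/2) * (n:ℝ) * ((Real.log n)^4 / (n:ℝ)^2) := h5
        _ = (7/2) * (Real.log n)^4 / n := h6
    have hsplit : |(rn - ra - rb) - (1/2) * (Real.log (1+t) + Real.log (1-t))
          - ((m:ℝ) * Real.log (1+t) + (b:ℝ) * Real.log (1-t)) + (k:ℝ)^2/(2*n)|
        ≤ |rn - ra - rb| + (1/2) * |Real.log (1+t) + Real.log (1-t)|
          + |(m:ℝ) * Real.log (1+t) + (b:ℝ) * Real.log (1-t) - (k:ℝ)^2/(2*n)| := by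
      have e : (rn - ra - rb) - (1/2) * (Real.log (1+t) + Real.log (1-t))
          - ((m:ℝ) * Real.log (1+t) + (b:ℝ) * Real.log (1-t)) + (k:ℝ)^2/(2*n)
          = (rn - ra - rb) + (-((1/2) * (Real.log (1+t) + Real.log (1-t))))
            + (-(((m:ℝ) * Real.log (1+t) + (b:ℝ) * Real.log (1-t)) - (k:ℝ)^2/(2*n))) := by
        ring
      rw [e]
      refine (abs_add_three _ _ _).trans ?_
      rw [abs_neg, abs_neg, abs_mul, abs_of_pos (by norm_num : (0:ℝ) < 1/2)]
    have hrpow : (n:ℝ) ^ (-(1:ℝ)/2) = Real.sqrt n / n := by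
      rw [show (-(1:ℝ)/2) = -(1/(2:ℝ)) by norm_num, Real.rpow_neg hx0.le,
        ← Real.sqrt_eq_rpow, inv_eq_one_div, div_eq_div_iff hsqn0.ne' hx0.ne',
        one_mul, hsq]
    rw [hrpow]
    have hfinal : 5/(n:ℝ) + 2*(Real.log n)^2/n + (7/2) * (Real.log n)^4 / n
        ≤ Real.sqrt n / n := by
      rw [← add_div, ← add_div, div_le_div_iff₀ hx0 hx0]
      have hLsq1 : (1:ℝ) ≤ (Real.log n)^2 := by
        have := mul_le_mul hL1 hL1 (by norm_num) hLpos.le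
        calc (1:ℝ) = 1*1 := by norm_num
          _ ≤ Real.log n * Real.log n := this
          _ = (Real.log n)^2 := (pow_two (Real.log n)).symm
      have hL2 : (Real.log n)^2 ≤ (Real.log n)^4 := by
        have h7 : (0:ℝ) ≤ (Real.log n)^2 * ((Real.log n)^2 - 1) :=
          mul_nonneg (sq_nonneg _) (by linarith)
        linarith [h7]
      have h8 : (5:ℝ) + 2*(Real.log n)^2 + (7/2)*(Real.log n)^4 ≤ 16*(Real.log n)^4 := by
        linarith [hLsq1, hL2]
      have h9 := mul_le_mul_of_nonneg_right (h8.trans G1) hx0.le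
      linarith [h9]
    calc |(rn - ra - rb) - (1/2) * (Real.log (1+t) + Real.log (1-t))
          - ((m:ℝ) * Real.log (1+t) + (b:ℝ) * Real.log (1-t)) + (k:ℝ)^2/(2*n)|
        ≤ |rn - ra - rb| + (1/2) * |Real.log (1+t) + Real.log (1-t)|
          + |(m:ℝ) * Real.log (1+t) + (b:ℝ) * Real.log (1-t) - (k:ℝ)^2/(2*n)| := hsplit
      _ ≤ 5/(n:ℝ) + 2*(Real.log n)^2/n + (7/2) * (Real.log n)^4 / n := by
          have h3 := hmain.trans hb2'
          linarith [hR, hb1, h3]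
      _ ≤ Real.sqrt n / n := hfinal
  · -- equation
    rw [show -(k:ℝ)^2/(2*(n:ℝ)) + (Real.log X + (k:ℝ)^2/(2*n)) = Real.log X by ring,
      Real.exp_log hXpos, hX_def]
    field_simp
end
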